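/- Let G be a graph consisting of two cycles of lengths g₁ and g₂ sharing exactly one common vertex w (a daisy graph with two petals), where both g₁ and g₂ are even. Then dim(G) = 3 = 2c(G) - 1. -/

import Mathlib

open SimpleGraph

variable {V : Type*}

/-- `S` is a vertex metric generator of `G`. -/
def IsVMG (G : SimpleGraph V) (S : Set V) : Prop :=
  ∀ x x' : V, x ≠ x' → ∃ s ∈ S, G.dist s x ≠ G.dist s x'

/-- The vertex metric dimension of `G`. -/
noncomputable def vdim (G : SimpleGraph V) [Fintype V] : ℕ :=
  sInf {n | ∃ S : Finset V, IsVMG G ↑S ∧ S.card = n}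

/-- Distance from a vertex to an edge: minimum over the endpoints. -/
noncomputable def eDist (G : SimpleGraph V) (s : V) : Sym2 V → ℕ :=
  Sym2.lift ⟨fun a b => min (G.dist s a) (G.dist s b), fun a b => min_comm _ _⟩

/-- `S` is an edge metric generator of `G`. -/
def IsEMG (G : SimpleGraph V) (S : Set V) : Prop :=
  ∀ e ∈ G.edgeSet, ∀ e' ∈ G.edgeSet, e ≠ e' → ∃ s ∈ S, eDist G s e ≠ eDist G s e'

/-- The edge metric dimension of `G`. -/
noncomputable def edim (G : SimpleGraph V) [Fintype V] : ℕ :=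
  sInf {n | ∃ S : Finset V, IsEMG G ↑S ∧ S.card = n}


section DaisyAux

variable {V : Type*} {G : SimpleGraph V}

lemma walk_getVert_eq_support_getElem' {u v : V} (p : G.Walk u v) (i : ℕ) (h : i ≤ p.length) :
    p.getVert i = p.support[i]'(by simp [Walk.length_support]; omega) := by
  induction p generalizing i with
  | nil => simp at h; subst h; simp
  | cons h q ih =>
    cases i with
    | zero => simp
    | succ n =>
      simp only [Walk.getVert_cons_succ, Walk.support_cons, List.getElem_cons_succ]
      exact ih n (by simpa using h)

lemma cycle_getVert_inj {w : V} (c : G.Walk w w) (hc : c.IsCycle) {i j : ℕ}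
    (hi : i < c.length) (hj : j < c.length) (h : c.getVert i = c.getVert j) : i = j := by
  have hlt : c.support.tail.length = c.length := by
    have := c.length_support; simp [List.length_tail, this]
  have key : ∀ k (h2 : k < c.length),
      c.getVert (k+1) = c.support.tail[k]'(by simpa [hlt] using h2) := by
    intro k h2
    rw [walk_getVert_eq_support_getElem' c (k+1) (by omega)]
    rw [List.getElem_of_eq c.support_eq_cons]
    simp
  have hnd := hc.support_nodup
  have inj : ∀ a b, 1 ≤ a → a ≤ c.length → 1 ≤ b → b ≤ c.length →
      c.getVert a = c.getVert b → a = b := by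
    intro a b ha1 ha2 hb1 hb2 hab
    obtain ⟨a', rfl⟩ := Nat.exists_eq_add_of_le ha1
    obtain ⟨b', rfl⟩ := Nat.exists_eq_add_of_le hb1
    rw [Nat.add_comm 1 a'] at ha2 hab ⊢
    rw [Nat.add_comm 1 b'] at hb2 hab ⊢
    rw [key a' (by omega), key b' (by omega)] at hab
    have := List.Nodup.getElem_inj_iff hnd |>.mp hab
    omega
  rcases Nat.eq_zero_or_pos i with hi0 | hi1 <;> rcases Nat.eq_zero_or_pos j with hj0 | hj1
  · omega
  · exfalso
    subst hi0
    have : c.getVert c.length = c.getVert j := by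
      rw [c.getVert_length, ← h, c.getVert_zero]
    have := inj _ _ (by omega) le_rfl (by omega) (by omega) this
    omega
  · exfalso
    subst hj0
    have : c.getVert c.length = c.getVert i := by
      rw [c.getVert_length, h, c.getVert_zero]
    have := inj _ _ (by omega) le_rfl (by omega) (by omega) this
    omega
  · exact inj _ _ (by omega) (by omega) (by omega) (by omega) h

lemma end_mem_support_tail {w : V} (c : G.Walk w w) (h : 0 < c.length) :
    w ∈ c.support.tail := by
  have hlt : c.support.tail.length = c.length := by
    have := c.length_support; simp [List.length_tail, this]
  have hkey : c.getVert (c.length - 1 + 1) = c.support.tail[c.length - 1]'(by rw [hlt]; omega) := by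
    rw [walk_getVert_eq_support_getElem' c _ (by omega)]
    rw [List.getElem_of_eq c.support_eq_cons]
    simp
  have hw : c.getVert (c.length - 1 + 1) = w := by
    rw [(by omega : c.length - 1 + 1 = c.length), c.getVert_length]
  rw [hw] at hkey
  have hm : c.support.tail[c.length - 1]'(by rw [hlt]; omega) ∈ c.support.tail :=
    List.getElem_mem _
  rwa [← hkey] at hm

lemma walk_mem_edges_iff' {u v : V} (p : G.Walk u v) (e : Sym2 V) (he : e ∈ p.edges) :
    ∃ i < p.length, e = s(p.getVert i, p.getVert (i + 1)) := by
  induction p with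
  | nil => simp at he
  | cons h q ih =>
    simp only [Walk.edges_cons, List.mem_cons] at he
    rcases he with he | he
    · exact ⟨0, by simp, by simpa using he⟩
    · obtain ⟨i, hi, hei⟩ := ih he
      exact ⟨i + 1, by simp [hi], by simpa using hei⟩

lemma abs_sub_le_walk_length (f : V → ℤ) (hf : ∀ a b, G.Adj a b → |f a - f b| ≤ 1)
    {u v : V} (p : G.Walk u v) : |f u - f v| ≤ p.length := by
  induction p with
  | nil => simp
  | cons h q ih =>
    calc |f _ - f _| ≤ |f _ - f _| + |f _ - f _| := abs_sub_le _ _ _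
    _ ≤ 1 + q.length := by gcongr; exact hf _ _ h
    _ = _ := by push_cast [Walk.length_cons]; ring

lemma abs_sub_le_dist' (f : V → ℤ) (hf : ∀ a b, G.Adj a b → |f a - f b| ≤ 1)
    {u v : V} (h : G.Reachable u v) : |f u - f v| ≤ G.dist u v := by
  obtain ⟨p, hp⟩ := h.exists_walk_length_eq_dist
  rw [← hp]; exact abs_sub_le_walk_length f hf p

lemma dist_getVert_le' (hc : G.Connected) {u v : V} (p : G.Walk u v) (i j : ℕ) (hij : i ≤ j)
    (hj : j ≤ p.length) : G.dist (p.getVert i) (p.getVert j) ≤ j - i := by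
  induction j with
  | zero =>
    have h0 : i = 0 := by omega
    subst h0; simp
  | succ n ih =>
    rcases Nat.eq_or_lt_of_le hij with h | h
    · subst h; simp
    · have h1 : G.dist (p.getVert i) (p.getVert n) ≤ n - i := ih (by omega) (by omega)
      have h2 : G.Adj (p.getVert n) (p.getVert (n + 1)) := p.adj_getVert_succ (by omega)
      have := hc.dist_triangle (u := p.getVert i) (v := p.getVert n) (w := p.getVert (n+1))
      have h3 : G.dist (p.getVert n) (p.getVert (n+1)) ≤ 1 := by
        rw [dist_eq_one_iff_adj.mpr h2]
      omega

/-- distance to `w` along a cycle of length `g`, index `i`. -/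
def rho (g i : ℕ) : ℕ := min i (g - i)

/-- cyclic distance between indices `i j` on a cycle of length `g`. -/
def cdst (g i j : ℕ) : ℕ := min ((i - j) + (j - i)) (g - ((i - j) + (j - i)))

lemma daisy_dist_aux (G : SimpleGraph V) (w : V) (g₁ g₂ : ℕ)
    (c₁ c₂ : G.Walk w w) (hc₁ : c₁.IsCycle) (hc₂ : c₂.IsCycle)
    (hl₁ : c₁.length = g₁) (hl₂ : c₂.length = g₂)
    (hedge : ∀ e ∈ G.edgeSet, e ∈ c₁.edges ∨ e ∈ c₂.edges)
    (hshare : ∀ v : V, v ∈ c₁.support → v ∈ c₂.support → v = w)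
    (hconn : G.Connected) :
    (∀ i j, i ≤ g₁ → j ≤ g₁ → G.dist (c₁.getVert i) (c₁.getVert j) = cdst g₁ i j) ∧
    (∀ i j, i ≤ g₁ → j ≤ g₂ → G.dist (c₁.getVert i) (c₂.getVert j) = rho g₁ i + rho g₂ j) := by
  classical
  have hg₁ : 3 ≤ g₁ := by rw [← hl₁]; exact hc₁.three_le_length
  have hg₂ : 3 ≤ g₂ := by rw [← hl₂]; exact hc₂.three_le_length
  have hXmem : ∀ k, k ≤ g₁ → c₁.getVert k ∈ c₁.support := fun k hk =>
    Walk.mem_support_iff_exists_getVert.mpr ⟨k, rfl, by rw [hl₁]; exact hk⟩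
  have hYmem : ∀ k, k ≤ g₂ → c₂.getVert k ∈ c₂.support := fun k hk =>
    Walk.mem_support_iff_exists_getVert.mpr ⟨k, rfl, by rw [hl₂]; exact hk⟩
  have hinj1 : ∀ i j, i < g₁ → j < g₁ → c₁.getVert i = c₁.getVert j → i = j := fun i j hi hj h =>
    cycle_getVert_inj c₁ hc₁ (by rw [hl₁]; exact hi) (by rw [hl₁]; exact hj) h
  have hinj2 : ∀ i j, i < g₂ → j < g₂ → c₂.getVert i = c₂.getVert j → i = j := fun i j hi hj h =>
    cycle_getVert_inj c₂ hc₂ (by rw [hl₂]; exact hi) (by rw [hl₂]; exact hj) h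
  set ix1 : V → ℕ := fun v => sInf {i | c₁.getVert i = v} with hix1def
  set ix2 : V → ℕ := fun v => sInf {i | c₂.getVert i = v} with hix2def
  have hix1 : ∀ v ∈ c₁.support, c₁.getVert (ix1 v) = v ∧ ix1 v < g₁ := by
    intro v hv
    obtain ⟨n, hn, hnle⟩ := Walk.mem_support_iff_exists_getVert.mp hv
    rw [hl₁] at hnle
    have h1 : ix1 v ∈ {i | c₁.getVert i = v} := Nat.sInf_mem ⟨n, hn⟩
    refine ⟨h1, ?_⟩
    rcases Nat.lt_or_ge n g₁ with hlt | hge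
    · exact lt_of_le_of_lt (Nat.sInf_le hn) hlt
    · have hng : n = g₁ := by omega
      have hvw : v = w := by rw [← hn, hng, ← hl₁, c₁.getVert_length]
      have : ix1 v ≤ 0 := Nat.sInf_le (by simp [hvw, c₁.getVert_zero])
      omega
  have hix2 : ∀ v ∈ c₂.support, c₂.getVert (ix2 v) = v ∧ ix2 v < g₂ := by
    intro v hv
    obtain ⟨n, hn, hnle⟩ := Walk.mem_support_iff_exists_getVert.mp hv
    rw [hl₂] at hnle
    have h1 : ix2 v ∈ {i | c₂.getVert i = v} := Nat.sInf_mem ⟨n, hn⟩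
    refine ⟨h1, ?_⟩
    rcases Nat.lt_or_ge n g₂ with hlt | hge
    · exact lt_of_le_of_lt (Nat.sInf_le hn) hlt
    · have hng : n = g₂ := by omega
      have hvw : v = w := by rw [← hn, hng, ← hl₂, c₂.getVert_length]
      have : ix2 v ≤ 0 := Nat.sInf_le (by simp [hvw, c₂.getVert_zero])
      omega
  have hix1w : ix1 w = 0 := Nat.le_zero.mp (Nat.sInf_le (by simp [c₁.getVert_zero]))
  have hix1X : ∀ k, k < g₁ → ix1 (c₁.getVert k) = k := by
    intro k hk
    obtain ⟨h1, h2⟩ := hix1 _ (hXmem k (le_of_lt hk))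
    exact hinj1 _ _ h2 hk h1
  have hix2X : ∀ k, k < g₂ → ix2 (c₂.getVert k) = k := by
    intro k hk
    obtain ⟨h1, h2⟩ := hix2 _ (hYmem k (le_of_lt hk))
    exact hinj2 _ _ h2 hk h1
  have hedge' : ∀ a b : V, G.Adj a b →
      (∃ k, k < g₁ ∧ ((a = c₁.getVert k ∧ b = c₁.getVert (k+1)) ∨
        (b = c₁.getVert k ∧ a = c₁.getVert (k+1)))) ∨
      (∃ k, k < g₂ ∧ ((a = c₂.getVert k ∧ b = c₂.getVert (k+1)) ∨
        (b = c₂.getVert k ∧ a = c₂.getVert (k+1)))) := by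
    intro a b hab
    rcases hedge s(a,b) (G.mem_edgeSet.mpr hab) with h | h
    · obtain ⟨k, hk, he⟩ := walk_mem_edges_iff' c₁ _ h
      rw [Sym2.eq_iff] at he
      exact Or.inl ⟨k, by rw [hl₁] at hk; exact hk, by tauto⟩
    · obtain ⟨k, hk, he⟩ := walk_mem_edges_iff' c₂ _ h
      rw [Sym2.eq_iff] at he
      exact Or.inr ⟨k, by rw [hl₂] at hk; exact hk, by tauto⟩
  -- lower bound within cycle 1
  have lowXX : ∀ i j, i ≤ g₁ → j ≤ g₁ →
      (cdst g₁ i j : ℤ) ≤ G.dist (c₁.getVert i) (c₁.getVert j) := by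
    intro i j hi hj
    set f : V → ℤ := fun v =>
      if v ∈ c₁.support then (cdst g₁ i (ix1 v) : ℤ) else (rho g₁ i : ℤ) with hf
    have hfX : ∀ k, k ≤ g₁ → f (c₁.getVert k) = (cdst g₁ i k : ℤ) := by
      intro k hk
      rcases Nat.lt_or_ge k g₁ with hk' | hk'
      · simp only [hf]
        rw [if_pos (hXmem k hk), hix1X k hk']
      · have hkg : k = g₁ := by omega
        rw [hkg]
        have hgv : c₁.getVert g₁ = w := by rw [← hl₁, c₁.getVert_length]
        rw [hgv]
        simp only [hf]
        rw [if_pos c₁.start_mem_support, hix1w]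
        simp only [cdst]; push_cast; omega
    have hfY : ∀ k, k ≤ g₂ → f (c₂.getVert k) = (rho g₁ i : ℤ) := by
      intro k hk
      by_cases hmem : c₂.getVert k ∈ c₁.support
      · have hw : c₂.getVert k = w := hshare _ hmem (hYmem k hk)
        rw [hw]
        simp only [hf]
        rw [if_pos c₁.start_mem_support, hix1w]
        simp only [cdst, rho]; push_cast; omega
      · simp only [hf]; rw [if_neg hmem]
    have hlip : ∀ a b, G.Adj a b → |f a - f b| ≤ 1 := by
      intro a b hab
      rcases hedge' a b hab with ⟨k, hk, hcase⟩ | ⟨k, hk, hcase⟩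
      · rcases hcase with ⟨ha, hb⟩ | ⟨hb, ha⟩ <;> subst ha <;> subst hb <;>
          rw [hfX k (by omega), hfX (k+1) (by omega)] <;>
          · rw [abs_le]; simp only [cdst]; push_cast; omega
      · rcases hcase with ⟨ha, hb⟩ | ⟨hb, ha⟩ <;> subst ha <;> subst hb <;>
          rw [hfY k (by omega), hfY (k+1) (by omega)] <;> simp
    have habs := abs_sub_le_dist' f hlip (hconn (c₁.getVert i) (c₁.getVert j))
    rw [hfX i hi, hfX j hj] at habs
    have h0 : ((cdst g₁ i i : ℕ) : ℤ) = 0 := by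
      simp only [cdst]; push_cast; omega
    rw [h0, zero_sub, abs_neg, abs_of_nonneg (by positivity)] at habs
    exact habs
  -- upper bound within cycle 1
  have upXX : ∀ i j, i ≤ j → j ≤ g₁ →
      G.dist (c₁.getVert i) (c₁.getVert j) ≤ min (j - i) (g₁ - j + i) := by
    intro i j hij hj
    have h1 : G.dist (c₁.getVert i) (c₁.getVert j) ≤ j - i :=
      dist_getVert_le' hconn c₁ i j hij (by rw [hl₁]; exact hj)
    have h2a : G.dist (c₁.getVert 0) (c₁.getVert i) ≤ i := by
      simpa using dist_getVert_le' hconn c₁ 0 i (by omega) (by rw [hl₁]; omega)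
    have h2b : G.dist (c₁.getVert j) (c₁.getVert c₁.length) ≤ c₁.length - j :=
      dist_getVert_le' hconn c₁ j _ (by rw [hl₁]; omega) le_rfl
    rw [c₁.getVert_length, hl₁] at h2b
    rw [c₁.getVert_zero] at h2a
    have htri := hconn.dist_triangle (u := c₁.getVert i) (v := w) (w := c₁.getVert j)
    rw [dist_comm (u := c₁.getVert i) (v := w)] at htri
    rw [dist_comm (u := w) (v := c₁.getVert j)] at htri
    omega
  have hXX : ∀ i j, i ≤ g₁ → j ≤ g₁ →
      G.dist (c₁.getVert i) (c₁.getVert j) = cdst g₁ i j := by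
    intro i j hi hj
    rcases le_total i j with h | h
    · have hu := upXX i j h hj
      have hlow := lowXX i j hi hj
      simp only [cdst] at *
      omega
    · have hu := upXX j i h hi
      have hlow := lowXX i j hi hj
      rw [SimpleGraph.dist_comm] at hu
      simp only [cdst] at *
      omega
  refine ⟨hXX, ?_⟩
  -- cross distances
  have upY : ∀ j, j ≤ g₂ → G.dist w (c₂.getVert j) ≤ rho g₂ j := by
    intro j hj
    have h1 : G.dist (c₂.getVert 0) (c₂.getVert j) ≤ j := by
      simpa using dist_getVert_le' hconn c₂ 0 j (by omega) (by rw [hl₂]; omega)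
    have h2 : G.dist (c₂.getVert j) (c₂.getVert c₂.length) ≤ c₂.length - j :=
      dist_getVert_le' hconn c₂ j _ (by rw [hl₂]; omega) le_rfl
    rw [c₂.getVert_length, hl₂] at h2
    rw [c₂.getVert_zero] at h1
    rw [SimpleGraph.dist_comm] at h2
    simp only [rho]
    omega
  intro i j hi hj
  have low : (rho g₁ i + rho g₂ j : ℤ) ≤ G.dist (c₁.getVert i) (c₂.getVert j) := by
    set f : V → ℤ := fun v =>
      if v ∈ c₁.support then (rho g₁ (ix1 v) : ℤ) else -(rho g₂ (ix2 v) : ℤ) with hf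
    have hfX : ∀ k, k ≤ g₁ → f (c₁.getVert k) = (rho g₁ k : ℤ) := by
      intro k hk
      rcases Nat.lt_or_ge k g₁ with hk' | hk'
      · simp only [hf]
        rw [if_pos (hXmem k hk), hix1X k hk']
      · have hkg : k = g₁ := by omega
        rw [hkg]
        have hgw : c₁.getVert g₁ = w := by rw [← hl₁, c₁.getVert_length]
        rw [hgw]
        simp only [hf]
        rw [if_pos c₁.start_mem_support, hix1w]
        simp only [rho]; push_cast; omega
    have hfY : ∀ k, k ≤ g₂ → f (c₂.getVert k) = -(rho g₂ k : ℤ) := by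
      intro k hk
      by_cases hmem : c₂.getVert k ∈ c₁.support
      · have hw : c₂.getVert k = w := hshare _ hmem (hYmem k hk)
        have hrk : rho g₂ k = 0 := by
          rcases Nat.lt_or_ge k g₂ with hk' | hk'
          · have : k = 0 := hinj2 k 0 hk' (by omega) (by rw [hw, c₂.getVert_zero])
            simp [this, rho]
          · have : k = g₂ := by omega
            simp [this, rho]
        rw [hw, hrk]
        simp only [hf]
        rw [if_pos c₁.start_mem_support, hix1w]
        simp [rho]
      · simp only [hf]
        rw [if_neg hmem]
        rcases Nat.lt_or_ge k g₂ with hk' | hk'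
        · rw [hix2X k hk']
        · have hkg : k = g₂ := by omega
          have hgw : c₂.getVert k = w := by rw [hkg, ← hl₂, c₂.getVert_length]
          exact absurd (show c₂.getVert k ∈ c₁.support by
            rw [hgw]; exact c₁.start_mem_support) hmem
    have hlip : ∀ a b, G.Adj a b → |f a - f b| ≤ 1 := by
      intro a b hab
      rcases hedge' a b hab with ⟨k, hk, hcase⟩ | ⟨k, hk, hcase⟩
      · rcases hcase with ⟨ha, hb⟩ | ⟨hb, ha⟩ <;> subst ha <;> subst hb <;>
          rw [hfX k (by omega), hfX (k+1) (by omega)] <;>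
          · rw [abs_le]; simp only [rho]; push_cast; omega
      · rcases hcase with ⟨ha, hb⟩ | ⟨hb, ha⟩ <;> subst ha <;> subst hb <;>
          rw [hfY k (by omega), hfY (k+1) (by omega)] <;>
          · rw [abs_le]; simp only [rho]; push_cast; omega
    have habs := abs_sub_le_dist' f hlip (hconn (c₁.getVert i) (c₂.getVert j))
    rw [hfX i hi, hfY j hj, sub_neg_eq_add] at habs
    rw [abs_of_nonneg (by positivity)] at habs
    push_cast
    push_cast at habs
    exact habs
  have up : G.dist (c₁.getVert i) (c₂.getVert j) ≤ rho g₁ i + rho g₂ j := by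
    have htri := hconn.dist_triangle (u := c₁.getVert i) (v := w) (w := c₂.getVert j)
    have h1 : G.dist (c₁.getVert i) w ≤ rho g₁ i := by
      have := hXX i 0 hi (by omega)
      rw [c₁.getVert_zero] at this
      rw [this]
      simp only [cdst, rho]; omega
    have h2 := upY j hj
    omega
  omega

end DaisyAux

set_option maxHeartbeats 4000000

/-- A daisy graph with two even petals of lengths `g₁, g₂ ≥ 4` (two cycles
sharing exactly the vertex `w`, together covering all vertices and edges of
`G`) has vertex metric dimension `3 = 2c(G) - 1`. -/
theorem stmt16 [Fintype V] (G : SimpleGraph V) (w : V) (g₁ g₂ : ℕ)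
    (hg₁ : 4 ≤ g₁) (hg₂ : 4 ≤ g₂) (he₁ : Even g₁) (he₂ : Even g₂)
    (c₁ c₂ : G.Walk w w) (hc₁ : c₁.IsCycle) (hc₂ : c₂.IsCycle)
    (hl₁ : c₁.length = g₁) (hl₂ : c₂.length = g₂)
    (hvert : ∀ v : V, v ∈ c₁.support ∨ v ∈ c₂.support)
    (hedge : ∀ e ∈ G.edgeSet, e ∈ c₁.edges ∨ e ∈ c₂.edges)
    (hshare : ∀ v : V, v ∈ c₁.support → v ∈ c₂.support → v = w) :
    vdim G = 3 ∧
      (3 : ℤ) = 2 * ((G.edgeSet.ncard : ℤ) - (Fintype.card V : ℤ) + 1) - 1 := by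
  classical
  obtain ⟨a, ha⟩ := he₁
  obtain ⟨b, hb⟩ := he₂
  -- connectivity
  have hconn : G.Connected := by
    have hne : Nonempty V := ⟨w⟩
    refine ⟨fun u v => ?_⟩
    have hr : ∀ x : V, G.Reachable w x := by
      intro x
      rcases hvert x with h | h
      · exact ⟨c₁.takeUntil x h⟩
      · exact ⟨c₂.takeUntil x h⟩
    exact (hr u).symm.trans (hr v)
  obtain ⟨hdXX, hdXY⟩ := daisy_dist_aux G w g₁ g₂ c₁ c₂ hc₁ hc₂ hl₁ hl₂ hedge hshare hconn
  obtain ⟨hdYY, hdYX'⟩ := daisy_dist_aux G w g₂ g₁ c₂ c₁ hc₂ hc₁ hl₂ hl₁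
    (fun e he => (hedge e he).symm) (fun v h1 h2 => hshare v h2 h1) hconn
  have hdYX : ∀ i j, i ≤ g₁ → j ≤ g₂ →
      G.dist (c₂.getVert j) (c₁.getVert i) = rho g₁ i + rho g₂ j := by
    intro i j hi hj
    rw [hdYX' j i hj hi]; omega
  have hdXY' : ∀ i j, i ≤ g₁ → j ≤ g₂ →
      G.dist (c₁.getVert i) (c₂.getVert j) = rho g₁ i + rho g₂ j := hdXY
  -- basic support facts
  have hXmem : ∀ k, k ≤ g₁ → c₁.getVert k ∈ c₁.support := fun k hk =>
    Walk.mem_support_iff_exists_getVert.mpr ⟨k, rfl, by rw [hl₁]; exact hk⟩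
  have hYmem : ∀ k, k ≤ g₂ → c₂.getVert k ∈ c₂.support := fun k hk =>
    Walk.mem_support_iff_exists_getVert.mpr ⟨k, rfl, by rw [hl₂]; exact hk⟩
  have hinj1 : ∀ i j, i < g₁ → j < g₁ → c₁.getVert i = c₁.getVert j → i = j := fun i j hi hj h =>
    cycle_getVert_inj c₁ hc₁ (by rw [hl₁]; exact hi) (by rw [hl₁]; exact hj) h
  have hinj2 : ∀ i j, i < g₂ → j < g₂ → c₂.getVert i = c₂.getVert j → i = j := fun i j hi hj h =>
    cycle_getVert_inj c₂ hc₂ (by rw [hl₂]; exact hi) (by rw [hl₂]; exact hj) h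
  have hXY : ∀ i j, 0 < i → i < g₁ → j ≤ g₂ → c₁.getVert i ≠ c₂.getVert j := by
    intro i j h0 hi hj heq
    have h1 : c₁.getVert i ∈ c₂.support := heq ▸ hYmem j hj
    have h2 : c₁.getVert i = w := hshare _ (hXmem i (le_of_lt hi)) h1
    have : i = 0 := hinj1 i 0 hi (by omega) (by rw [h2, c₁.getVert_zero])
    omega
  have hsupp1 : ∀ s ∈ c₁.support, ∃ i, i < g₁ ∧ s = c₁.getVert i := by
    intro s hs
    obtain ⟨n, hn, hle⟩ := Walk.mem_support_iff_exists_getVert.mp hs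
    rw [hl₁] at hle
    rcases Nat.lt_or_ge n g₁ with h | h
    · exact ⟨n, h, hn.symm⟩
    · refine ⟨0, by omega, ?_⟩
      rw [c₁.getVert_zero, ← hn, (by omega : n = g₁), ← hl₁, c₁.getVert_length]
  have hsupp2 : ∀ s ∈ c₂.support, ∃ j, j < g₂ ∧ s = c₂.getVert j := by
    intro s hs
    obtain ⟨n, hn, hle⟩ := Walk.mem_support_iff_exists_getVert.mp hs
    rw [hl₂] at hle
    rcases Nat.lt_or_ge n g₂ with h | h
    · exact ⟨n, h, hn.symm⟩
    · refine ⟨0, by omega, ?_⟩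
      rw [c₂.getVert_zero, ← hn, (by omega : n = g₂), ← hl₂, c₂.getVert_length]
  have hclass : ∀ v : V, (∃ i, i < g₁ ∧ v = c₁.getVert i) ∨ (∃ j, j < g₂ ∧ v = c₂.getVert j) := by
    intro v
    rcases hvert v with h | h
    · exact Or.inl (hsupp1 v h)
    · exact Or.inr (hsupp2 v h)
  -- the resolving set
  have hd1 : c₁.getVert 1 ≠ c₁.getVert (g₁ - 1) := fun h => by
    have := hinj1 1 (g₁-1) (by omega) (by omega) h; omega
  have hd2 : c₁.getVert 1 ≠ c₂.getVert 1 := hXY 1 1 (by omega) (by omega) (by omega)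
  have hd3 : c₁.getVert (g₁-1) ≠ c₂.getVert 1 := hXY (g₁-1) 1 (by omega) (by omega) (by omega)
  have hmem3 : 3 ∈ {n | ∃ S : Finset V, IsVMG G ↑S ∧ S.card = n} := by
    refine ⟨{c₁.getVert 1, c₁.getVert (g₁-1), c₂.getVert 1}, ?_, ?_⟩
    · intro x x' hne
      have key1 : ∀ i i', i < g₁ → i' < g₁ → i ≠ i' →
          ∃ s ∈ (↑({c₁.getVert 1, c₁.getVert (g₁-1), c₂.getVert 1} : Finset V) : Set V),
            G.dist s (c₁.getVert i) ≠ G.dist s (c₁.getVert i') := by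
        intro i i' hi hi' hii
        by_contra hcon
        push_neg at hcon
        have e1 := hcon (c₁.getVert 1) (by simp)
        have e2 := hcon (c₁.getVert (g₁-1)) (by simp)
        have e3 := hcon (c₂.getVert 1) (by simp)
        rw [hdXX 1 i (by omega) (by omega), hdXX 1 i' (by omega) (by omega)] at e1
        rw [hdXX (g₁-1) i (by omega) (by omega), hdXX (g₁-1) i' (by omega) (by omega)] at e2
        rw [hdYX i 1 (by omega) (by omega), hdYX i' 1 (by omega) (by omega)] at e3
        simp only [cdst, rho] at e1 e2 e3
        exact hii (by omega)
      have key2 : ∀ j j', j < g₂ → j' < g₂ → j ≠ j' →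
          ∃ s ∈ (↑({c₁.getVert 1, c₁.getVert (g₁-1), c₂.getVert 1} : Finset V) : Set V),
            G.dist s (c₂.getVert j) ≠ G.dist s (c₂.getVert j') := by
        intro j j' hj hj' hjj
        by_contra hcon
        push_neg at hcon
        have e1 := hcon (c₁.getVert 1) (by simp)
        have e3 := hcon (c₂.getVert 1) (by simp)
        rw [hdXY 1 j (by omega) (by omega), hdXY 1 j' (by omega) (by omega)] at e1
        rw [hdYY 1 j (by omega) (by omega), hdYY 1 j' (by omega) (by omega)] at e3
        simp only [cdst, rho] at e1 e3
        exact hjj (by omega)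
      have key3 : ∀ i j, i < g₁ → j < g₂ → c₁.getVert i ≠ c₂.getVert j →
          ∃ s ∈ (↑({c₁.getVert 1, c₁.getVert (g₁-1), c₂.getVert 1} : Finset V) : Set V),
            G.dist s (c₁.getVert i) ≠ G.dist s (c₂.getVert j) := by
        intro i j hi hj hij
        by_contra hcon
        push_neg at hcon
        have e1 := hcon (c₁.getVert 1) (by simp)
        have e2 := hcon (c₁.getVert (g₁-1)) (by simp)
        have e3 := hcon (c₂.getVert 1) (by simp)
        rw [hdXX 1 i (by omega) (by omega), hdXY 1 j (by omega) (by omega)] at e1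
        rw [hdXX (g₁-1) i (by omega) (by omega), hdXY (g₁-1) j (by omega) (by omega)] at e2
        rw [hdYX i 1 (by omega) (by omega), hdYY 1 j (by omega) (by omega)] at e3
        simp only [cdst, rho] at e1 e2 e3
        have hij0 : i = 0 ∧ j = 0 := by omega
        exact hij (by rw [hij0.1, hij0.2, c₁.getVert_zero, c₂.getVert_zero])
      rcases hclass x with ⟨i, hi, rfl⟩ | ⟨j, hj, rfl⟩ <;>
        rcases hclass x' with ⟨i', hi', rfl⟩ | ⟨j', hj', rfl⟩
      · exact key1 i i' hi hi' (fun h => hne (by rw [h]))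
      · exact key3 i j' hi hj' hne
      · obtain ⟨s, hs, hd⟩ := key3 i' j hi' hj hne.symm
        exact ⟨s, hs, hd.symm⟩
      · exact key2 j j' hj hj' (fun h => hne (by rw [h]))
    · rw [Finset.card_insert_of_notMem (by simp [hd1, hd2]),
        Finset.card_insert_of_notMem (by simp [hd3]), Finset.card_singleton]
  -- lower bound: every metric generator has ≥ 3 elements
  have hlb : ∀ n ∈ {n | ∃ S : Finset V, IsVMG G ↑S ∧ S.card = n}, 3 ≤ n := by
    rintro n ⟨T, hT, rfl⟩
    by_contra hn
    push_neg at hn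
    by_cases hA : ∀ s ∈ T, s ∈ c₁.support
    · obtain ⟨s, hsT, hd⟩ := hT (c₂.getVert 1) (c₂.getVert (g₂-1))
        (fun h => by have := hinj2 1 (g₂-1) (by omega) (by omega) h; omega)
      obtain ⟨i, hi, rfl⟩ := hsupp1 s (hA s hsT)
      rw [hdXY i 1 (by omega) (by omega), hdXY i (g₂-1) (by omega) (by omega)] at hd
      exact hd (by simp only [rho]; omega)
    · by_cases hB : ∀ s ∈ T, s ∈ c₂.support
      · obtain ⟨s, hsT, hd⟩ := hT (c₁.getVert 1) (c₁.getVert (g₁-1))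
          (fun h => by have := hinj1 1 (g₁-1) (by omega) (by omega) h; omega)
        obtain ⟨j, hj, rfl⟩ := hsupp2 s (hB s hsT)
        rw [hdYX 1 j (by omega) (by omega), hdYX (g₁-1) j (by omega) (by omega)] at hd
        exact hd (by simp only [rho]; omega)
      · push_neg at hA hB
        obtain ⟨s₂, hs₂T, hs₂n⟩ := hA
        obtain ⟨s₁, hs₁T, hs₁n⟩ := hB
        have hs1 : ∃ i, 0 < i ∧ i < g₁ ∧ s₁ = c₁.getVert i := by
          rcases hclass s₁ with ⟨i, hi, h⟩ | ⟨j, hj, h⟩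
          · refine ⟨i, ?_, hi, h⟩
            rcases Nat.eq_zero_or_pos i with rfl | h0
            · exact absurd (by rw [h, c₁.getVert_zero]; exact c₂.start_mem_support) hs₁n
            · exact h0
          · exact absurd (h ▸ hYmem j (by omega)) hs₁n
        have hs2 : ∃ j, 0 < j ∧ j < g₂ ∧ s₂ = c₂.getVert j := by
          rcases hclass s₂ with ⟨i, hi, h⟩ | ⟨j, hj, h⟩
          · exact absurd (h ▸ hXmem i (by omega)) hs₂n
          · refine ⟨j, ?_, hj, h⟩
            rcases Nat.eq_zero_or_pos j with rfl | h0
            · exact absurd (by rw [h, c₂.getVert_zero]; exact c₁.start_mem_support) hs₂n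
            · exact h0
        obtain ⟨i, hi0, hi, rfl⟩ := hs1
        obtain ⟨j, hj0, hj, rfl⟩ := hs2
        have hij : c₁.getVert i ≠ c₂.getVert j := hXY i j hi0 hi (by omega)
        have hTsub : ∀ s ∈ T, s = c₁.getVert i ∨ s = c₂.getVert j := by
          intro s hs
          by_contra hcc
          push_neg at hcc
          have hsub : ({c₁.getVert i, c₂.getVert j, s} : Finset V) ⊆ T := by
            intro t ht
            simp only [Finset.mem_insert, Finset.mem_singleton] at ht
            rcases ht with rfl | rfl | rfl
            · exact hs₁T
            · exact hs₂T
            · exact hs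
          have hc3 : ({c₁.getVert i, c₂.getVert j, s} : Finset V).card = 3 := by
            rw [Finset.card_insert_of_notMem (by simp [hij, Ne.symm hcc.1]),
              Finset.card_insert_of_notMem (by simp [Ne.symm hcc.2]), Finset.card_singleton]
          have := Finset.card_le_card hsub
          omega
        have main : ∀ u v : V, u ≠ v →
            G.dist (c₁.getVert i) u = G.dist (c₁.getVert i) v →
            G.dist (c₂.getVert j) u = G.dist (c₂.getVert j) v → False := by
          intro u v huv h1 h2
          obtain ⟨s, hsT, hd⟩ := hT u v huv
          rcases hTsub s hsT with rfl | rfl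
          · exact hd h1
          · exact hd h2
        by_cases hia : i = a
        · refine main (c₁.getVert (a-1)) (c₁.getVert (a+1))
            (fun h => by have := hinj1 _ _ (by omega) (by omega) h; omega) ?_ ?_
          · rw [hdXX i (a-1) (by omega) (by omega), hdXX i (a+1) (by omega) (by omega)]
            simp only [cdst]; omega
          · rw [hdYX (a-1) j (by omega) (by omega), hdYX (a+1) j (by omega) (by omega)]
            simp only [rho]; omega
        · by_cases hjb : j = b
          · refine main (c₂.getVert (b-1)) (c₂.getVert (b+1))
              (fun h => by have := hinj2 _ _ (by omega) (by omega) h; omega) ?_ ?_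
            · rw [hdXY i (b-1) (by omega) (by omega), hdXY i (b+1) (by omega) (by omega)]
              simp only [rho]; omega
            · rw [hdYY j (b-1) (by omega) (by omega), hdYY j (b+1) (by omega) (by omega)]
              simp only [cdst]; omega
          · rcases Nat.lt_or_ge i a with hia' | hia' <;> rcases Nat.lt_or_ge j b with hjb' | hjb'
            · refine main (c₁.getVert (g₁-1)) (c₂.getVert (g₂-1))
                (hXY (g₁-1) (g₂-1) (by omega) (by omega) (by omega)) ?_ ?_
              · rw [hdXX i (g₁-1) (by omega) (by omega), hdXY i (g₂-1) (by omega) (by omega)]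
                simp only [cdst, rho]; omega
              · rw [hdYX (g₁-1) j (by omega) (by omega), hdYY j (g₂-1) (by omega) (by omega)]
                simp only [cdst, rho]; omega
            · refine main (c₁.getVert (g₁-1)) (c₂.getVert 1)
                (hXY (g₁-1) 1 (by omega) (by omega) (by omega)) ?_ ?_
              · rw [hdXX i (g₁-1) (by omega) (by omega), hdXY i 1 (by omega) (by omega)]
                simp only [cdst, rho]; omega
              · rw [hdYX (g₁-1) j (by omega) (by omega), hdYY j 1 (by omega) (by omega)]
                simp only [cdst, rho]; omega
            · refine main (c₁.getVert 1) (c₂.getVert (g₂-1))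
                (hXY 1 (g₂-1) (by omega) (by omega) (by omega)) ?_ ?_
              · rw [hdXX i 1 (by omega) (by omega), hdXY i (g₂-1) (by omega) (by omega)]
                simp only [cdst, rho]; omega
              · rw [hdYX 1 j (by omega) (by omega), hdYY j (g₂-1) (by omega) (by omega)]
                simp only [cdst, rho]; omega
            · refine main (c₁.getVert 1) (c₂.getVert 1)
                (hXY 1 1 (by omega) (by omega) (by omega)) ?_ ?_
              · rw [hdXX i 1 (by omega) (by omega), hdXY i 1 (by omega) (by omega)]
                simp only [cdst, rho]; omega
              · rw [hdYX 1 j (by omega) (by omega), hdYY j 1 (by omega) (by omega)]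
                simp only [cdst, rho]; omega
  have hvdim : vdim G = 3 :=
    le_antisymm (Nat.sInf_le hmem3) (le_csInf ⟨3, hmem3⟩ hlb)
  -- counting edges and vertices
  have hE : G.edgeSet.ncard = g₁ + g₂ := by
    have hEeq : G.edgeSet = ↑(c₁.edges.toFinset ∪ c₂.edges.toFinset) := by
      ext e
      simp only [Finset.coe_union, Set.mem_union, Finset.mem_coe, List.mem_toFinset]
      constructor
      · exact fun h => hedge e h
      · rintro (h | h)
        · exact c₁.edges_subset_edgeSet h
        · exact c₂.edges_subset_edgeSet h
    rw [hEeq, Set.ncard_coe_finset]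
    have hdisj : Disjoint c₁.edges.toFinset c₂.edges.toFinset := by
      rw [Finset.disjoint_left]
      intro e he1 he2
      rw [List.mem_toFinset] at he1 he2
      induction e with
      | h p q =>
        have hadj : G.Adj p q := G.mem_edgeSet.mp (c₁.edges_subset_edgeSet he1)
        have hp : p = w := hshare p (c₁.fst_mem_support_of_mem_edges he1)
          (c₂.fst_mem_support_of_mem_edges he2)
        have hq : q = w := hshare q (c₁.snd_mem_support_of_mem_edges he1)
          (c₂.snd_mem_support_of_mem_edges he2)
        rw [hp, hq] at hadj
        exact hadj.ne rfl
    rw [Finset.card_union_of_disjoint hdisj,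
      List.toFinset_card_of_nodup hc₁.isCircuit.isTrail.edges_nodup,
      List.toFinset_card_of_nodup hc₂.isCircuit.isTrail.edges_nodup,
      c₁.length_edges, c₂.length_edges, hl₁, hl₂]
  have hV : Fintype.card V = g₁ + g₂ - 1 := by
    have hw1 : w ∈ c₁.support.tail := end_mem_support_tail c₁ (by rw [hl₁]; omega)
    have hw2 : w ∈ c₂.support.tail := end_mem_support_tail c₂ (by rw [hl₂]; omega)
    have hA1 : c₁.support.toFinset = c₁.support.tail.toFinset := by
      conv_lhs => rw [c₁.support_eq_cons]
      rw [List.toFinset_cons]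
      exact Finset.insert_eq_self.mpr (List.mem_toFinset.mpr hw1)
    have hA2 : c₂.support.toFinset = c₂.support.tail.toFinset := by
      conv_lhs => rw [c₂.support_eq_cons]
      rw [List.toFinset_cons]
      exact Finset.insert_eq_self.mpr (List.mem_toFinset.mpr hw2)
    have hcard1 : c₁.support.toFinset.card = g₁ := by
      rw [hA1, List.toFinset_card_of_nodup hc₁.support_nodup]
      have := c₁.length_support
      simp only [List.length_tail]
      omega
    have hcard2 : c₂.support.toFinset.card = g₂ := by
      rw [hA2, List.toFinset_card_of_nodup hc₂.support_nodup]
      have := c₂.length_support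
      simp only [List.length_tail]
      omega
    have huniv : (Finset.univ : Finset V) = c₁.support.toFinset ∪ c₂.support.toFinset := by
      ext v
      simpa [List.mem_toFinset] using hvert v
    have hinter : c₁.support.toFinset ∩ c₂.support.toFinset = {w} := by
      ext v
      simp only [Finset.mem_inter, List.mem_toFinset, Finset.mem_singleton]
      constructor
      · rintro ⟨h1, h2⟩; exact hshare v h1 h2
      · rintro rfl; exact ⟨c₁.start_mem_support, c₂.start_mem_support⟩
    have := Finset.card_union_add_card_inter c₁.support.toFinset c₂.support.toFinset
    rw [← huniv, hinter, hcard1, hcard2, Finset.card_singleton, Finset.card_univ] at this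
    omega
  refine ⟨hvdim, ?_⟩
  rw [hE, hV]
  have h1 : ((g₁ + g₂ - 1 : ℕ) : ℤ) = (g₁ : ℤ) + g₂ - 1 := by push_cast [Nat.cast_sub]; omega
  rw [h1]
  push_cast
  ring
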